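/- If sup_k L_{ρ_k}(X_{k+1}, Z_{k+1}, A_k) < ∞, sup_k ‖A_k‖_F ≤ a, ρ_k = μᵏρ₀ with μ > 1, and f, g ≥ 0 are the fidelity and regularizer terms, then both (f(X_k)) and (g(Z_k)) are bounded sequences. -/

import Mathlib

open Matrix

variable {m n : ℕ}

/-- Singular values: square roots of the eigenvalues of `XᵀX`. -/
noncomputable def singularValues (X : Matrix (Fin m) (Fin n) ℝ) : Fin n → ℝ :=
  fun i => Real.sqrt ((show (Xᵀ * X).IsHermitian by
    simpa [Matrix.conjTranspose_eq_transpose_of_trivial] using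
      Matrix.isHermitian_conjTranspose_mul_self X).eigenvalues i)

/-- Nuclear norm: the sum of the singular values. -/
noncomputable def nuclearNorm (X : Matrix (Fin m) (Fin n) ℝ) : ℝ :=
  ∑ i, singularValues X i

/-- Frobenius norm. -/
noncomputable def frobNorm (M : Matrix (Fin m) (Fin n) ℝ) : ℝ :=
  Real.sqrt (∑ i, ∑ j, (M i j) ^ 2)

/-- Squared Frobenius norm. -/
noncomputable def frobSq (M : Matrix (Fin m) (Fin n) ℝ) : ℝ :=
  ∑ i, ∑ j, (M i j) ^ 2

/-- Trace inner product `⟨M, N⟩ = tr(MᵀN)`. -/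
noncomputable def matInner (M N : Matrix (Fin m) (Fin n) ℝ) : ℝ :=
  Matrix.trace (Mᵀ * N)

lemma trace_eq_sum_eig {n : ℕ} {A : Matrix (Fin n) (Fin n) ℝ} (hA : A.IsHermitian) :
    A.trace = ∑ i, hA.eigenvalues i := by
  simpa using hA.trace_eq_sum_eigenvalues

lemma frobSq_nonneg (M : Matrix (Fin m) (Fin n) ℝ) : 0 ≤ frobSq M := by
  apply Finset.sum_nonneg; intro i _; apply Finset.sum_nonneg; intro j _; positivity

lemma frobNorm_nonneg (M : Matrix (Fin m) (Fin n) ℝ) : 0 ≤ frobNorm M :=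
  Real.sqrt_nonneg _

lemma frobNorm_sq (M : Matrix (Fin m) (Fin n) ℝ) : frobNorm M ^ 2 = frobSq M :=
  Real.sq_sqrt (frobSq_nonneg M)

lemma frobSq_eq_trace (M : Matrix (Fin m) (Fin n) ℝ) :
    frobSq M = (Mᵀ * M).trace := by
  simp only [frobSq, Matrix.trace, Matrix.diag, Matrix.mul_apply, Matrix.transpose_apply]
  rw [Finset.sum_comm]
  simp [pow_two]

lemma frobNorm_le_nuclearNorm (M : Matrix (Fin m) (Fin n) ℝ) :
    frobNorm M ≤ nuclearNorm M := by
  have hH : (Mᵀ * M).IsHermitian := by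
    simpa [Matrix.conjTranspose_eq_transpose_of_trivial] using
      Matrix.isHermitian_conjTranspose_mul_self M
  have hps : (Mᵀ * M).PosSemidef := by
    have := Matrix.posSemidef_conjTranspose_mul_self M
    simpa using this
  have hnn : ∀ i, 0 ≤ hH.eigenvalues i := fun i => hps.eigenvalues_nonneg i
  have hsum : frobSq M = ∑ i, hH.eigenvalues i := by
    rw [frobSq_eq_trace]
    exact trace_eq_sum_eig hH
  have hnonneg : 0 ≤ nuclearNorm M :=
    Finset.sum_nonneg fun i _ => Real.sqrt_nonneg _
  have key : frobSq M ≤ (nuclearNorm M) ^ 2 := by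
    rw [hsum]
    calc ∑ i, hH.eigenvalues i = ∑ i, (singularValues M i) ^ 2 := by
          apply Finset.sum_congr rfl; intro i _
          simp [singularValues, Real.sq_sqrt (hnn i)]
      _ ≤ (∑ i, singularValues M i) ^ 2 :=
          Finset.sum_sq_le_sq_sum_of_nonneg (fun i _ => Real.sqrt_nonneg _)
      _ = (nuclearNorm M) ^ 2 := by rw [nuclearNorm]
  have hM : frobNorm M = Real.sqrt (frobSq M) := rfl
  rw [hM]
  calc Real.sqrt (frobSq M) ≤ Real.sqrt ((nuclearNorm M) ^ 2) := Real.sqrt_le_sqrt key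
    _ = nuclearNorm M := Real.sqrt_sq hnonneg

lemma g_nonneg (lam α : ℝ) (hlam : 0 < lam) (hα0 : 0 ≤ α) (hα1 : α ≤ 1)
    (M : Matrix (Fin m) (Fin n) ℝ) :
    0 ≤ lam * (nuclearNorm M - α * frobNorm M) := by
  have h1 := frobNorm_le_nuclearNorm M
  have h2 := frobNorm_nonneg M
  have : α * frobNorm M ≤ nuclearNorm M := by nlinarith
  nlinarith

lemma matInner_eq_sum (A D : Matrix (Fin m) (Fin n) ℝ) :
    matInner A D = ∑ i, ∑ j, A i j * D i j := by
  simp only [matInner, Matrix.trace, Matrix.diag, Matrix.mul_apply, Matrix.transpose_apply]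
  rw [Finset.sum_comm]

lemma inner_quad_lower (A D : Matrix (Fin m) (Fin n) ℝ) {r : ℝ} (hr : 0 < r) :
    -(frobSq A / (2 * r)) ≤ matInner A D + (r / 2) * frobSq D := by
  rw [matInner_eq_sum]
  have hexp : matInner A D + (r / 2) * frobSq D =
      ∑ i, ∑ j, (A i j * D i j + (r / 2) * (D i j) ^ 2) := by
    rw [matInner_eq_sum, frobSq, Finset.mul_sum]
    rw [← Finset.sum_add_distrib]
    apply Finset.sum_congr rfl; intro i _
    rw [Finset.mul_sum, ← Finset.sum_add_distrib]
  rw [matInner_eq_sum] at hexp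
  rw [hexp]
  have hneg : -(frobSq A / (2 * r)) = ∑ i, ∑ j, -((A i j) ^ 2 / (2 * r)) := by
    rw [frobSq, Finset.sum_div]
    rw [neg_eq_iff_eq_neg, ← Finset.sum_neg_distrib]
    apply Finset.sum_congr rfl; intro i _
    rw [Finset.sum_div, ← Finset.sum_neg_distrib]
    apply Finset.sum_congr rfl; intro j _
    ring
  rw [hneg]
  apply Finset.sum_le_sum; intro i _
  apply Finset.sum_le_sum; intro j _
  have h2r : 0 < 2 * r := by linarith
  rw [neg_le, le_div_iff₀ h2r]
  nlinarith [sq_nonneg (A i j + r * D i j)]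

/-- If the augmented Lagrangian values `L_{ρ_k}(X_{k+1}, Z_{k+1}, A_k)` are bounded
above, the multipliers are bounded (`‖A_k‖_F ≤ a`), `ρ_k = μᵏρ₀` with `μ > 1`, and
`f(X) = ‖W(Y − X)‖_F² ≥ 0`, `g(Z) = λ(‖Z‖_* − α‖Z‖_F) ≥ 0` (with `λ > 0`, `0 ≤ α ≤ 1`),
then both sequences `(f(X_k))` and `(g(Z_k))` are bounded. -/
theorem fidelity_and_regularizer_bounded
    (W : Matrix (Fin m) (Fin m) ℝ) (Y : Matrix (Fin m) (Fin n) ℝ)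
    (lam α μ ρ₀ a : ℝ) (hlam : 0 < lam) (hα0 : 0 ≤ α) (hα1 : α ≤ 1)
    (hμ : 1 < μ) (hρ₀ : 0 < ρ₀)
    (ρ : ℕ → ℝ) (hρ : ∀ k, ρ k = μ ^ k * ρ₀)
    (X Z A : ℕ → Matrix (Fin m) (Fin n) ℝ)
    (f : Matrix (Fin m) (Fin n) ℝ → ℝ) (g : Matrix (Fin m) (Fin n) ℝ → ℝ)
    (hf : ∀ M, f M = frobSq (W * (Y - M)))
    (hg : ∀ M, g M = lam * (nuclearNorm M - α * frobNorm M))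
    (L : ℝ → Matrix (Fin m) (Fin n) ℝ → Matrix (Fin m) (Fin n) ℝ →
      Matrix (Fin m) (Fin n) ℝ → ℝ)
    (hL : ∀ r Xm Zm Am, L r Xm Zm Am =
      f Xm + g Zm + matInner Am (Xm - Zm) + (r / 2) * frobSq (Xm - Zm))
    (hupd : ∀ k, A (k + 1) = A k + ρ k • (X (k + 1) - Z (k + 1)))
    (hLbdd : ∃ B, ∀ k, L (ρ k) (X (k + 1)) (Z (k + 1)) (A k) ≤ B)
    (hAbdd : ∀ k, frobNorm (A k) ≤ a) :
    (∃ Bf, ∀ k, f (X (k + 1)) ≤ Bf) ∧ (∃ Bg, ∀ k, g (Z (k + 1)) ≤ Bg) := by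
  obtain ⟨B, hB⟩ := hLbdd
  have ha0 : 0 ≤ a := le_trans (frobNorm_nonneg (A 0)) (hAbdd 0)
  have key : ∀ k, f (X (k + 1)) + g (Z (k + 1)) ≤ B + a ^ 2 / (2 * ρ₀) := by
    intro k
    have hrpos : 0 < ρ k := by
      rw [hρ]; positivity
    have hrge : ρ₀ ≤ ρ k := by
      rw [hρ]
      nlinarith [one_le_pow₀ hμ.le (n := k), hρ₀]
    have hinner := inner_quad_lower (A k) (X (k + 1) - Z (k + 1)) hrpos
    have hAsq : frobSq (A k) ≤ a ^ 2 := by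
      rw [← frobNorm_sq]
      exact pow_le_pow_left₀ (frobNorm_nonneg _) (hAbdd k) 2
    have hfrac : frobSq (A k) / (2 * ρ k) ≤ a ^ 2 / (2 * ρ₀) := by
      apply div_le_div₀ (by positivity) hAsq (by linarith) (by linarith)
    have hBk := hB k
    rw [hL] at hBk
    linarith
  constructor
  · refine ⟨B + a ^ 2 / (2 * ρ₀), fun k => ?_⟩
    have hgnn : 0 ≤ g (Z (k + 1)) := by rw [hg]; exact g_nonneg lam α hlam hα0 hα1 _
    linarith [key k]
  · refine ⟨B + a ^ 2 / (2 * ρ₀), fun k => ?_⟩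
    have hfnn : 0 ≤ f (X (k + 1)) := by rw [hf]; exact frobSq_nonneg _
    linarith [key k]
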